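/- Let A be an associative ring with 1 and I, J two-sided ideals of A. For any x ∈ GL(n,A,I) and y ∈ GL(n,A,J), the commutator xyx⁻¹y⁻¹ lies in GL(n,A,IJ+JI), i.e. all entries of xyx⁻¹y⁻¹ − 1 lie in IJ + JI. -/

import Mathlib

open Matrix

variable (n : Type*) [DecidableEq n] [Fintype n] (A : Type*) [Ring A]

/-- The elementary matrix `e_{ij}(ξ) = 1 + ξ E_{ij}` as a unit of the matrix ring
(its inverse is `e_{ij}(-ξ)`). -/
def elemUnit {n : Type*} [DecidableEq n] [Fintype n] {A : Type*} [Ring A]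
    (i j : n) (h : i ≠ j) (ξ : A) : (Matrix n n A)ˣ where
  val := 1 + Matrix.single i j ξ
  inv := 1 + Matrix.single i j (-ξ)
  val_inv := by
    have h0 : Matrix.single i j ξ * Matrix.single i j (-ξ) = 0 :=
      Matrix.single_mul_single_of_ne (h := h.symm) ..
    have h1 : Matrix.single i j ξ + Matrix.single i j (-ξ) = 0 := by
      rw [← Matrix.single_add, add_neg_cancel, Matrix.single_zero]
    rw [mul_add, mul_one, add_mul, one_mul, h0, add_zero, add_assoc, h1, add_zero]
  inv_val := by
    have h0 : Matrix.single i j (-ξ) * Matrix.single i j ξ = 0 :=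
      Matrix.single_mul_single_of_ne (h := h.symm) ..
    have h1 : Matrix.single i j (-ξ) + Matrix.single i j ξ = 0 := by
      rw [← Matrix.single_add, neg_add_cancel, Matrix.single_zero]
    rw [mul_add, mul_one, add_mul, one_mul, h0, add_zero, add_assoc, h1, add_zero]

/-- The subgroup `E(n,S)` of `GL(n,A)` generated by the elementary matrices
`e_{ij}(ξ)` with `ξ ∈ S`, `i ≠ j`. -/
def elemSubgroup (S : Set A) : Subgroup (Matrix n n A)ˣ :=
  Subgroup.closure {u : (Matrix n n A)ˣ | ∃ i j : n, ∃ ξ ∈ S, i ≠ j ∧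
    u.val = 1 + Matrix.single i j ξ}

/-- The relative elementary subgroup `E(n,A,I)`, the normal closure of `E(n,I)`
in `E(n,A)`. -/
def relElemSubgroup (I : TwoSidedIdeal A) : Subgroup (Matrix n n A)ˣ :=
  Subgroup.closure {x : (Matrix n n A)ˣ |
    ∃ c ∈ elemSubgroup n A (Set.univ : Set A), ∃ u ∈ elemSubgroup n A {a : A | a ∈ I},
      x = c * u * c⁻¹}

/-- The principal congruence subgroup `GL(n,A,K)`: invertible matrices congruent to the
identity modulo `K`.  (This set is already a group, so it coincides with the subgroup it
generates.) -/
def congrSubgroup (K : TwoSidedIdeal A) : Subgroup (Matrix n n A)ˣ :=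
  Subgroup.closure {u : (Matrix n n A)ˣ | ∀ i j : n, (u.val - 1) i j ∈ K}

/-- If `x ∈ GL(n,A,I)` and `y ∈ GL(n,A,J)`, then all entries of `xyx⁻¹y⁻¹ - 1` lie in
the symmetrized product `IJ + JI` (the two-sided ideal generated by the products
`ab`, `ba` with `a ∈ I`, `b ∈ J`). -/
theorem commutator_congruence_mem {N : ℕ} {A : Type*} [Ring A]
    (I J : TwoSidedIdeal A) (x y : (Matrix (Fin N) (Fin N) A)ˣ)
    (hx : ∀ i j, (x.val - 1) i j ∈ I) (hy : ∀ i j, (y.val - 1) i j ∈ J) :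
    ∀ i j, ((x * y * x⁻¹ * y⁻¹).val - 1) i j ∈
      TwoSidedIdeal.span {z : A | ∃ a ∈ I, ∃ b ∈ J, z = a * b ∨ z = b * a} := by
  set K := TwoSidedIdeal.span {z : A | ∃ a ∈ I, ∃ b ∈ J, z = a * b ∨ z = b * a} with hK
  have step1 : ∀ i j, (x.val * y.val - y.val * x.val) i j ∈ K := by
    intro i j
    have eq : x.val * y.val - y.val * x.val
        = (x.val - 1) * (y.val - 1) - (y.val - 1) * (x.val - 1) := by noncomm_ring
    rw [eq, Matrix.sub_apply, Matrix.mul_apply, Matrix.mul_apply]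
    refine K.sub_mem (K.finsetSum_mem _ _ fun k _ => ?_) (K.finsetSum_mem _ _ fun k _ => ?_)
    · exact TwoSidedIdeal.subset_span ⟨_, hx i k, _, hy k j, Or.inl rfl⟩
    · exact TwoSidedIdeal.subset_span ⟨_, hx k j, _, hy i k, Or.inr rfl⟩
  have key : (x * y * x⁻¹ * y⁻¹).val - 1
      = (x.val * y.val - y.val * x.val) * ((x⁻¹).val * (y⁻¹).val) := by
    have h1 : x.val * (x⁻¹).val = 1 := x.mul_inv
    have h2 : y.val * (y⁻¹).val = 1 := y.mul_inv
    rw [sub_mul]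
    have : y.val * x.val * ((x⁻¹).val * (y⁻¹).val) = 1 := by
      rw [mul_assoc, ← mul_assoc x.val, h1, one_mul, h2]
    rw [this]
    have : (x * y * x⁻¹ * y⁻¹).val = x.val * y.val * ((x⁻¹).val * (y⁻¹).val) := by
      rw [Units.val_mul, Units.val_mul, Units.val_mul, mul_assoc]
    rw [this]
  intro i j
  rw [key, Matrix.mul_apply]
  exact K.finsetSum_mem _ _ fun k _ => K.mul_mem_right _ _ (step1 i k)
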